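/- Let R be a finite commutative chain ring with maximal ideal ⟨γ⟩, nilpotency index t, and residue field of cardinality q. Let λ be a unit of R and n a positive integer with gcd(n, q) = 1. If C is a λ-constacyclic code of length n over R which is self-orthogonal (C ⊆ C⊥) and non-trivial (C is not contained in γ^{⌈t/2⌉}·R^n), then the image of λ in the residue field R/⟨γ⟩ equals 1 or −1; that is, λ − 1 ∈ ⟨γ⟩ or λ + 1 ∈ ⟨γ⟩. -/

import Mathlib

open Polynomial

section Defs

variable {R : Type*}

/-- An idempotent `e` of a commutative ring is *primitive* if it is nonzero and cannot be
written as a sum of two nonzero orthogonal idempotents. -/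
def IsPrimitiveIdem [CommRing R] (e : R) : Prop :=
  IsIdempotentElem e ∧ e ≠ 0 ∧
    ∀ u v : R, IsIdempotentElem u → IsIdempotentElem v → u * v = 0 → e = u + v →
      u = 0 ∨ v = 0

/-- A family of idempotents forming a complete set of pairwise orthogonal idempotents. -/
def IsCompleteOrthoIdem [CommRing R] {r : ℕ} (e : Fin r → R) : Prop :=
  (∀ i, IsIdempotentElem (e i)) ∧ (∑ i, e i) = 1 ∧
    ∀ i j, i ≠ j → e i * e j = 0

/-- A complete set of pairwise orthogonal primitive idempotents. -/
def IsCompletePrimIdem [CommRing R] {r : ℕ} (e : Fin r → R) : Prop :=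
  IsCompleteOrthoIdem e ∧ ∀ i, IsPrimitiveIdem (e i)

/-- The `lam`-constacyclic shift `(a_0, …, a_(n-1)) ↦ (lam·a_(n-1), a_0, …, a_(n-2))`. -/
def ctShift [CommRing R] {n : ℕ} [NeZero n] (lam : R) (a : Fin n → R) : Fin n → R :=
  fun i => if i = 0 then lam * a (i - 1) else a (i - 1)

/-- The dual code of a linear code of length `n` over `R`. -/
def dualCode [CommRing R] {n : ℕ} (Ccode : Submodule R (Fin n → R)) :
    Submodule R (Fin n → R) where
  carrier := {a | ∀ b ∈ Ccode, ∑ i, a i * b i = 0}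
  add_mem' := by
    intro a a' ha ha' b hb
    simpa [add_mul, Finset.sum_add_distrib] using by rw [ha b hb, ha' b hb, add_zero]
  zero_mem' := by intro b hb; simp
  smul_mem' := by
    intro c a ha b hb
    simpa [Finset.mul_sum, mul_assoc] using by rw [← Finset.mul_sum, ha b hb, mul_zero]

/-- The linear map `(a_0, …, a_(n-1)) ↦ a_0 + a_1 x + ⋯ + a_(n-1) x^(n-1)` from `R^n` to
`R[X]/⟨g⟩`. -/
noncomputable def polyLin [CommRing R] (n : ℕ) (g : R[X]) :
    (Fin n → R) →ₗ[R] (R[X] ⧸ Ideal.span {g}) where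
  toFun a := Ideal.Quotient.mk _ (∑ i, C (a i) * X ^ (i : ℕ))
  map_add' a b := by
    simp only [Pi.add_apply, map_add, add_mul, Finset.sum_add_distrib]
  map_smul' c a := by
    simp only [Pi.smul_apply, smul_eq_mul, RingHom.id_apply]
    have h : (∑ i : Fin n, C (c * a i) * X ^ (i : ℕ))
        = c • ∑ i : Fin n, C (a i) * X ^ (i : ℕ) := by
      rw [Finset.smul_sum]
      exact Finset.sum_congr rfl fun i _ => by
        rw [Polynomial.smul_eq_C_mul, ← mul_assoc, ← C_mul]
    rw [h]
    exact (Submodule.Quotient.mk_smul (Ideal.span {g}) c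
      (∑ i : Fin n, C (a i) * X ^ (i : ℕ))).symm

/-- The linear code of length `n` corresponding to an ideal of `R[X]/⟨g⟩` under the usual
identification. -/
noncomputable def idealCode [CommRing R] (n : ℕ) (g : R[X])
    (I : Ideal (R[X] ⧸ Ideal.span {g})) : Submodule R (Fin n → R) :=
  (Submodule.restrictScalars R (I : Submodule (R[X] ⧸ Ideal.span {g}) (R[X] ⧸ Ideal.span {g}))).comap
    (polyLin n g)

/-- The reciprocal `f* = a_0 x^(n-1) + a_1 x^(n-2) + ⋯ + a_(n-1)` of an element
`f = a_0 + a_1 x + ⋯ + a_(n-1) x^(n-1)` of `R[X]/⟨g⟩`, viewed in `R[X]/⟨h⟩`; the canonical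
representative of degree `< n` is obtained by reduction `%ₘ g` of any representative. -/
noncomputable def recip [CommRing R] (n : ℕ) (g h : R[X]) (f : R[X] ⧸ Ideal.span {g}) :
    R[X] ⧸ Ideal.span {h} :=
  Ideal.Quotient.mk _ (((Ideal.Quotient.mk_surjective f).choose %ₘ g).reflect (n - 1))

/-- The code `c·R^n = {(c·b_0, …, c·b_(n-1)) : b ∈ R^n}`. -/
def scalarCode [CommRing R] (n : ℕ) (c : R) : Submodule R (Fin n → R) where
  carrier := {a | ∀ i, ∃ b, a i = c * b}
  add_mem' := by
    intro a a' ha ha' i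
    obtain ⟨b, hb⟩ := ha i; obtain ⟨b', hb'⟩ := ha' i
    exact ⟨b + b', by simp [hb, hb', mul_add]⟩
  zero_mem' := fun i => ⟨0, by simp⟩
  smul_mem' := by
    intro r a ha i
    obtain ⟨b, hb⟩ := ha i
    exact ⟨r * b, by simp [hb]; ring⟩

end Defs


lemma aux_sq_zero_dvd {R : Type*} [CommRing R] [IsLocalRing R] (γ : R) (t : ℕ)
    (hmax : IsLocalRing.maximalIdeal R = Ideal.span {γ})
    (hnil : γ ^ t = 0) (hnil' : γ ^ (t - 1) ≠ 0)
    (x : R) (hx : x * x = 0) : γ ^ ((t + 1) / 2) ∣ x := by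
  rcases eq_or_ne x 0 with rfl | hx0
  · exact dvd_zero _
  have ht : 1 ≤ t := by
    by_contra h
    have : t = 0 := by omega
    subst this
    exact hnil' (by simpa using hnil)
  classical
  set P : ℕ → Prop := fun k => γ ^ k ∣ x with hP
  have hP0 : P 0 := by simp [hP]
  set k := Nat.findGreatest P t with hk
  have hPk : P k := Nat.findGreatest_spec (Nat.zero_le t) hP0
  have hkt : k < t := by
    rcases lt_or_eq_of_le (Nat.findGreatest_le (P := P) t) with h | h
    · exact h
    · exfalso
      have hPt : γ ^ t ∣ x := by rw [← h]; exact hPk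
      exact hx0 (zero_dvd_iff.mp (hnil ▸ hPt))
  have hnk : ¬ P (k + 1) :=
    Nat.findGreatest_is_greatest (Nat.lt_succ_self k) (by omega)
  obtain ⟨y, hy⟩ := hPk
  have hyu : IsUnit y := by
    by_contra hy'
    have hmem : y ∈ Ideal.span {γ} := by
      rw [← hmax]
      exact (IsLocalRing.mem_maximalIdeal y).mpr hy'
    obtain ⟨z, hz⟩ := Ideal.mem_span_singleton.mp hmem
    exact hnk ⟨z, by rw [hy, hz]; ring⟩
  have h2k : γ ^ (2 * k) = 0 := by
    have h : γ ^ (2 * k) * (y * y) = 0 := by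
      rw [← hx, hy]; ring
    exact ((hyu.mul hyu).mul_left_eq_zero).mp h
  have h2kt : t ≤ 2 * k := by
    by_contra h
    push_neg at h
    apply hnil'
    calc γ ^ (t - 1) = γ ^ (2 * k) * γ ^ (t - 1 - 2 * k) := by
          rw [← pow_add]; congr 1; omega
      _ = 0 := by rw [h2k, zero_mul]
  exact dvd_trans (pow_dvd_pow γ (by omega)) ⟨y, hy⟩

lemma aux_shift_sum {R : Type*} [CommRing R] {n : ℕ} [NeZero n] (lam : R) (a b : Fin n → R) :
    ∑ i, ctShift lam a i * ctShift lam b i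
      = (∑ i, a i * b i) + (lam ^ 2 - 1) * (a (-1) * b (-1)) := by
  have h1 : ∀ i : Fin n, ctShift lam a i * ctShift lam b i
      = (if i - 1 = -1 then lam ^ 2 else 1) * (a (i - 1) * b (i - 1)) := by
    intro i
    have : i - 1 = -1 ↔ i = 0 := by
      constructor
      · intro h; have := congrArg (· + 1) h; simpa [sub_add_cancel] using this
      · intro h; simp [h]
    rw [ctShift, ctShift]
    by_cases h : i = 0 <;> simp [h, this] <;> ring
  calc ∑ i, ctShift lam a i * ctShift lam b i
      = ∑ i, (if i - 1 = -1 then lam ^ 2 else 1) * (a (i - 1) * b (i - 1)) :=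
        Finset.sum_congr rfl fun i _ => h1 i
    _ = ∑ j, (if j = -1 then lam ^ 2 else 1) * (a j * b j) :=
        Fintype.sum_equiv (Equiv.subRight (1 : Fin n)) _ _ (fun i => rfl)
    _ = (∑ i, a i * b i) + (lam ^ 2 - 1) * (a (-1) * b (-1)) := by
        have : ∀ j : Fin n, (if j = -1 then lam ^ 2 else 1) * (a j * b j)
            = a j * b j + (if j = -1 then (lam ^ 2 - 1) * (a j * b j) else 0) := by
          intro j; by_cases h : j = -1 <;> simp [h] <;> ring
        rw [Finset.sum_congr rfl fun j _ => this j, Finset.sum_add_distrib]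
        congr 1
        simp [Finset.sum_ite_eq']


open Fin.NatCast Fin.CommRing in
/-- A non-trivial self-orthogonal λ-constacyclic code over a finite chain ring forces
`λ ≡ ±1` modulo the maximal ideal. -/
theorem residue_of_unit_of_self_orthogonal
    {R : Type*} [CommRing R] [Finite R] [IsLocalRing R]
    (γ : R) (t : ℕ)
    (hmax : IsLocalRing.maximalIdeal R = Ideal.span {γ})
    (hnil : γ ^ t = 0) (hnil' : γ ^ (t - 1) ≠ 0)
    (q : ℕ) (hq : q = Nat.card (IsLocalRing.ResidueField R))
    (lam : R) (hlam : IsUnit lam)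
    (n : ℕ) [NeZero n] (hgcd : Nat.gcd n q = 1)
    (Ccode : Submodule R (Fin n → R))
    (hcc : ∀ a ∈ Ccode, ctShift lam a ∈ Ccode)
    (hso : Ccode ≤ dualCode Ccode)
    (hnontrivial : ¬ Ccode ≤ scalarCode n (γ ^ ((t + 1) / 2))) :
    lam - 1 ∈ Ideal.span {γ} ∨ lam + 1 ∈ Ideal.span {γ} := by
  by_contra hcon
  push_neg at hcon
  obtain ⟨h1, h2⟩ := hcon
  have hprime : (Ideal.span {γ} : Ideal R).IsPrime := by
    rw [← hmax]; exact (IsLocalRing.maximalIdeal.isMaximal R).isPrime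
  have hu : IsUnit (lam ^ 2 - 1) := by
    by_contra hu
    have hm : lam ^ 2 - 1 ∈ Ideal.span {γ} := by
      rw [← hmax]; exact (IsLocalRing.mem_maximalIdeal _).mpr hu
    have hm' : (lam - 1) * (lam + 1) ∈ Ideal.span {γ} := by
      have e : (lam - 1) * (lam + 1) = lam ^ 2 - 1 := by ring
      rw [e]; exact hm
    rcases hprime.mem_or_mem hm' with h | h
    · exact h1 h
    · exact h2 h
  have hshift : ∀ m : ℕ, ∀ a ∈ Ccode, ∃ a' ∈ Ccode, ∀ i : Fin n,
      ∃ u : R, IsUnit u ∧ a' i = u * a (i - (m : Fin n)) := by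
    intro m
    induction m with
    | zero => intro a ha; exact ⟨a, ha, fun i => ⟨1, isUnit_one, by simp⟩⟩
    | succ m ih =>
      intro a ha
      obtain ⟨a', ha', hrep⟩ := ih a ha
      refine ⟨ctShift lam a', hcc a' ha', fun i => ?_⟩
      obtain ⟨u, hu', he⟩ := hrep (i - 1)
      have hind : i - 1 - (m : Fin n) = i - ((m + 1 : ℕ) : Fin n) := by
        push_cast
        ring
      refine ⟨(if i = 0 then lam else 1) * u, ?_, ?_⟩
      · split_ifs
        · exact hlam.mul hu'
        · exact isUnit_one.mul hu'
      · rw [ctShift]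
        split_ifs with h <;> rw [he, hind] <;> ring
  have hlast : ∀ a ∈ Ccode, ∀ b ∈ Ccode, a (-1) * b (-1) = 0 := by
    intro a ha b hb
    have h0 : ∑ i, a i * b i = 0 := hso ha b hb
    have h0' : ∑ i, ctShift lam a i * ctShift lam b i = 0 :=
      hso (hcc a ha) (ctShift lam b) (hcc b hb)
    rw [aux_shift_sum, h0, zero_add] at h0'
    exact (hu.mul_right_eq_zero).mp h0'
  have hkey : ∀ a ∈ Ccode, ∀ i : Fin n, a i * a i = 0 := by
    intro a ha i
    obtain ⟨a', ha', hra⟩ := hshift ((-1 - i : Fin n)).val a ha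
    obtain ⟨u, hu1, he1⟩ := hra (-1)
    have hcast : ((((-1 - i : Fin n)).val : ℕ) : Fin n) = -1 - i := Fin.cast_val_eq_self _
    rw [hcast] at he1
    have harg : (-1 : Fin n) - (-1 - i) = i := by ring
    rw [harg] at he1
    have h0 := hlast a' ha' a' ha'
    rw [he1] at h0
    have h0' : (u * u) * (a i * a i) = 0 := by rw [← h0]; ring
    exact ((hu1.mul hu1).mul_right_eq_zero).mp h0'
  apply hnontrivial
  intro a ha
  show ∀ i, ∃ b, a i = γ ^ ((t + 1) / 2) * b
  intro i
  obtain ⟨c, hc⟩ := aux_sq_zero_dvd γ t hmax hnil hnil' (a i) (hkey a ha i)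
  exact ⟨c, hc⟩
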